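/- Define q : O_2^n × O_2^n → {±1} by q(j,i) = χ_i(j) where χ is the order-comparison cocycle on transpositions. Then q is a rack 2-cocycle on the conjugation rack of transpositions: q_{i, j▷k} q_{j,k} = q_{i▷j, i▷k} q_{i,k} for all transpositions i, j, k. -/

import Mathlib

/-- The order-comparison sign `χ_i(σ)` for a transposition `i = (a b)`,
`a < b`: it is `1` if `σ a < σ b` and `-1` otherwise (and `-1` by convention
if `i` is not a transposition). -/
noncomputable def chiSwap {n : ℕ} (i σ : Equiv.Perm (Fin n)) : ℤ :=
  if ∃ a b : Fin n, a < b ∧ i = Equiv.swap a b ∧ σ a < σ b then 1 else -1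

lemma chiSwap_swap {n : ℕ} (x y : Fin n) (σ : Equiv.Perm (Fin n)) (h : x ≠ y) :
    chiSwap (Equiv.swap x y) σ = if (σ x < σ y ↔ x < y) then 1 else -1 := by
  have key : (∃ a b : Fin n, a < b ∧ Equiv.swap x y = Equiv.swap a b ∧ σ a < σ b)
      ↔ (σ x < σ y ↔ x < y) := by
    constructor
    · rintro ⟨a, b, hab, hs, hσ⟩
      have hb : Equiv.swap x y a = b := by rw [hs]; simp
      have hxy : (x = a ∧ y = b) ∨ (y = a ∧ x = b) := by
        rcases eq_or_ne a x with rfl | hax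
        · left; exact ⟨rfl, by simpa using hb⟩
        · rcases eq_or_ne a y with rfl | hay
          · right; exact ⟨rfl, by simp [Equiv.swap_apply_right] at hb; omega⟩
          · exfalso
            rw [Equiv.swap_apply_of_ne_of_ne hax hay] at hb
            exact absurd hb hab.ne
      rcases hxy with ⟨rfl, rfl⟩ | ⟨rfl, rfl⟩
      · exact iff_of_true hσ hab
      · constructor
        · intro hxy; exact absurd (σ.injective (le_antisymm hσ.le hxy.le)) h.symm
        · intro hxy; exact absurd hab.trans (by intro hh; exact absurd (hh hxy) (lt_irrefl _))
    · intro hiff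
      rcases lt_or_gt_of_ne h with hxy | hyx
      · exact ⟨x, y, hxy, rfl, hiff.mpr hxy⟩
      · refine ⟨y, x, hyx, Equiv.swap_comm x y, ?_⟩
        have : ¬ σ x < σ y := fun hc => absurd (hiff.mp hc) (by omega)
        have hne : σ y ≠ σ x := fun hc => h.symm (σ.injective hc)
        omega
  simp only [chiSwap, key]

/-- `q(j,i) := χ_i(j)` is a rack 2-cocycle on the conjugation
rack of transpositions of `Sₙ`:
`q_{i, j▷k} q_{j,k} = q_{i▷j, i▷k} q_{i,k}`, where `x ▷ y = x y x⁻¹`. -/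
theorem stmt_5 (n : ℕ) (i j k : Equiv.Perm (Fin n))
    (hi : i.IsSwap) (hj : j.IsSwap) (hk : k.IsSwap) :
    chiSwap (j * k * j⁻¹) i * chiSwap k j =
      chiSwap (i * k * i⁻¹) (i * j * i⁻¹) * chiSwap k i := by
  obtain ⟨e, f, hef, rfl⟩ := hk
  rw [← Equiv.swap_apply_apply j e f, ← Equiv.swap_apply_apply i e f]
  rw [chiSwap_swap _ _ _ (fun hc => hef (j.injective hc)),
      chiSwap_swap _ _ _ hef,
      chiSwap_swap _ _ _ (fun hc => hef (i.injective hc)),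
      chiSwap_swap _ _ _ hef]
  simp only [Equiv.Perm.mul_apply, Equiv.Perm.inv_def, Equiv.symm_apply_apply]
  split_ifs <;> norm_num <;> tauto
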